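/- arXiv:1602.00996 — 8 statements merged into one kernel-verified Lean document; each statement's English description precedes it below -/
import Mathlib

section
/- Let μ ∈ ℂ, n ≥ 1 and V = ℂ[z]^n. The assignment (φ₋₁, φ₁) ↦ φ₁ is a bijection from the set of Casimir representations of semi-level μ on V onto the set of φ ∈ End₁(V) that are injective and satisfy π_μ(z+1)·w ∈ φ(V) for every w ∈ V (this condition states that the n-th invariant factor of the matrix of φ divides π_μ(z+1)). In particular, for each such φ there exists a unique φ₋₁ ∈ End₋₁(V) with φ₋₁∘φ = multiplication by π_μ(z) and φ∘φ₋₁ = multiplication by π_μ(z+1). -/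
open Polynomial

/-- The shift automorphism `∇ : ℂ[z] → ℂ[z]`, `p(z) ↦ p(z+1)`. -/
noncomputable def nabla : Polynomial ℂ ≃ₐ[ℂ] Polynomial ℂ := algEquivAevalXAddC 1

/-- `End_k(V)`: additive endomorphisms with `φ(p • v) = (∇^k p) • φ(v)`. -/
def IsSemilinearEnd {M : Type*} [AddCommMonoid M] [Module (Polynomial ℂ) M]
    (k : ℤ) (φ : M → M) : Prop :=
  (∀ v w : M, φ (v + w) = φ v + φ w) ∧
  ∀ (p : Polynomial ℂ) (v : M), φ (p • v) = ((nabla ^ k) p) • φ v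

/-- `π_μ(z) = (z+μ)(z-μ-1)`. -/
noncomputable def piMu (μ : ℂ) : Polynomial ℂ := (X + C μ) * (X - C μ - 1)

/-- A Casimir representation of semi-level `μ` on a `ℂ[z]`-module `M`:
a pair `(φ₋₁, φ₁)` of semilinear endomorphisms of degrees `-1` and `1` with
`φ₋₁ ∘ φ₁ = π_μ(z)·` and `φ₁ ∘ φ₋₁ = π_μ(z+1)·`. -/
def IsCasimirRep {M : Type*} [AddCommMonoid M] [Module (Polynomial ℂ) M]
    (μ : ℂ) (φm φp : M → M) : Prop :=
  IsSemilinearEnd (-1) φm ∧ IsSemilinearEnd 1 φp ∧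
  (∀ v, φm (φp v) = piMu μ • v) ∧
  (∀ v, φp (φm v) = (nabla (piMu μ)) • v)

lemma piMu_ne_zero (μ : ℂ) : piMu μ ≠ 0 := by
  have h1 : (X + C μ : Polynomial ℂ) ≠ 0 := X_add_C_ne_zero μ
  have h2 : (X - C μ - 1 : Polynomial ℂ) ≠ 0 := by
    have : (X - C μ - 1 : Polynomial ℂ) = X - C (μ + 1) := by
      simp [map_add]; ring
    rw [this]; exact X_sub_C_ne_zero (μ + 1)
  exact mul_ne_zero h1 h2

lemma smul_inj_aux {p : Polynomial ℂ} (hp : p ≠ 0) {n : ℕ}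
    {v w : Fin n → Polynomial ℂ} (h : p • v = p • w) : v = w := by
  funext i
  have := congrFun h i
  simp only [Pi.smul_apply, smul_eq_mul] at this
  exact mul_left_cancel₀ hp this

/-- `(φ₋₁, φ₁) ↦ φ₁` is a bijection from Casimir representations of semi-level
`μ` on `V = ℂ[z]^n` onto the injective `φ ∈ End₁(V)` such that `π_μ(z+1)·w ∈ φ(V)` for all
`w` (i.e. the `n`-th invariant factor of `φ` divides `π_μ(z+1)`); in particular for each such
`φ` there is a unique `φ₋₁ ∈ End₋₁(V)` making `(φ₋₁, φ)` a Casimir representation. -/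
theorem stmt_2 (μ : ℂ) (n : ℕ) (hn : 1 ≤ n) :
    (∀ φm φp : (Fin n → Polynomial ℂ) → (Fin n → Polynomial ℂ),
      IsCasimirRep μ φm φp →
        IsSemilinearEnd 1 φp ∧ Function.Injective φp ∧
          ∀ w : Fin n → Polynomial ℂ, ∃ v, (nabla (piMu μ)) • w = φp v) ∧
    (∀ φp : (Fin n → Polynomial ℂ) → (Fin n → Polynomial ℂ),
      IsSemilinearEnd 1 φp → Function.Injective φp →
        (∀ w : Fin n → Polynomial ℂ, ∃ v, (nabla (piMu μ)) • w = φp v) →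
        ∃! φm : (Fin n → Polynomial ℂ) → (Fin n → Polynomial ℂ),
          IsCasimirRep μ φm φp) := by
  have hpi : piMu μ ≠ 0 := piMu_ne_zero μ
  constructor
  · rintro φm φp ⟨hm, hp, hmp, hpm⟩
    refine ⟨hp, ?_, fun w => ⟨φm w, (hpm w).symm⟩⟩
    intro v w h
    have : piMu μ • v = piMu μ • w := by rw [← hmp, ← hmp, h]
    exact smul_inj_aux hpi this
  · intro φp hp hinj hsurj
    choose ψ hψ using hsurj
    have key : ∀ v, φp (ψ v) = nabla (piMu μ) • v := fun v => (hψ v).symm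
    have hp1 : ∀ (p : Polynomial ℂ) v, φp (p • v) = nabla p • φp v := by
      intro p v; have := hp.2 p v; rwa [zpow_one] at this
    have hinv : ∀ p : Polynomial ℂ, nabla ((nabla ^ (-1 : ℤ)) p) = p := by
      intro p
      rw [zpow_neg_one]
      exact nabla.apply_symm_apply p
    refine ⟨ψ, ⟨⟨?_, ?_⟩, hp, ?_, key⟩, ?_⟩
    · intro v w
      apply hinj
      rw [hp.1, key, key, key, smul_add]
    · intro p v
      apply hinj
      rw [key, hp1, hinv, key, smul_comm]
    · intro v
      apply hinj
      rw [key, hp1]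
    · rintro φm' ⟨_, _, _, hpm'⟩
      funext w
      apply hinj
      rw [hpm', key]
end

section
/- Let μ ∈ ℂ and let A₋₁, A₁ ∈ M_n(ℂ[z]) satisfy A₋₁(z)·A₁(z−1) = π_μ(z)·I_n and A₁(z)·A₋₁(z+1) = π_μ(z+1)·I_n. Suppose A₁(z) = U(z)·S(z)·V(z) with U, V ∈ GL_n(ℂ[z]) and S(z) diagonal. Then T(z) := V(z−1)·A₋₁(z)·U(z−1) is a diagonal matrix over ℂ[z] satisfying S(z)·T(z+1) = π_μ(z+1)·I_n, and A₋₁(z) = V(z−1)⁻¹·T(z)·U(z−1)⁻¹. In particular, writing S = diag(s₁,…,s_n) and T = diag(t₁,…,t_n), one has s_i(z)·t_i(z+1) = π_μ(z+1) for each i. -/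
open Polynomial

lemma map_mul_symm (n : ℕ) (A B : Matrix (Fin n) (Fin n) (Polynomial ℂ)) :
    (A*B).map ⇑nabla.symm = A.map ⇑nabla.symm * B.map ⇑nabla.symm :=
  Matrix.map_mul (f := nabla.symm.toAlgHom.toRingHom)

lemma map_mul_nabla (n : ℕ) (A B : Matrix (Fin n) (Fin n) (Polynomial ℂ)) :
    (A*B).map ⇑nabla = A.map ⇑nabla * B.map ⇑nabla :=
  Matrix.map_mul (f := nabla.toAlgHom.toRingHom)

lemma map_cancel (n : ℕ) (A : Matrix (Fin n) (Fin n) (Polynomial ℂ)) :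
    (A.map ⇑nabla).map ⇑nabla.symm = A := by
  rw [Matrix.map_map]
  have : ⇑nabla.symm ∘ ⇑nabla = id := by funext p; exact nabla.symm_apply_apply p
  rw [this, Matrix.map_id]

lemma map_cancel' (n : ℕ) (A : Matrix (Fin n) (Fin n) (Polynomial ℂ)) :
    (A.map ⇑nabla.symm).map ⇑nabla = A := by
  rw [Matrix.map_map]
  have : ⇑nabla ∘ ⇑nabla.symm = id := by funext p; exact nabla.apply_symm_apply p
  rw [this, Matrix.map_id]

lemma map_smul_one (n : ℕ) (p : Polynomial ℂ) :
    ((nabla p) • (1 : Matrix (Fin n) (Fin n) (Polynomial ℂ))).map ⇑nabla.symm = p • 1 := by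
  ext i j
  simp [Matrix.map_apply, Matrix.one_apply]
  split <;> simp

/-- if `A₋₁(z)·A₁(z−1) = π_μ(z)·I`, `A₁(z)·A₋₁(z+1) = π_μ(z+1)·I` and
`A₁ = U·S·V` with `U, V ∈ GL_n(ℂ[z])` and `S` diagonal, then
`T(z) := V(z−1)·A₋₁(z)·U(z−1)` is diagonal, satisfies `S(z)·T(z+1) = π_μ(z+1)·I` and
`A₋₁(z) = V(z−1)⁻¹·T(z)·U(z−1)⁻¹`; entrywise, `s_i(z)·t_i(z+1) = π_μ(z+1)`. -/
theorem stmt_3 (μ : ℂ) (n : ℕ)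
    (Am A1 U V S : Matrix (Fin n) (Fin n) (Polynomial ℂ))
    (h1 : Am * A1.map ⇑nabla.symm = piMu μ • (1 : Matrix (Fin n) (Fin n) (Polynomial ℂ)))
    (h2 : A1 * Am.map ⇑nabla = (nabla (piMu μ)) • (1 : Matrix (Fin n) (Fin n) (Polynomial ℂ)))
    (hU : IsUnit U) (hV : IsUnit V) (hS : S.IsDiag)
    (hA1 : A1 = U * S * V) :
    (V.map ⇑nabla.symm * Am * U.map ⇑nabla.symm).IsDiag ∧
    S * (V.map ⇑nabla.symm * Am * U.map ⇑nabla.symm).map ⇑nabla =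
      (nabla (piMu μ)) • (1 : Matrix (Fin n) (Fin n) (Polynomial ℂ)) ∧
    Am = (V.map ⇑nabla.symm)⁻¹ * (V.map ⇑nabla.symm * Am * U.map ⇑nabla.symm) *
      (U.map ⇑nabla.symm)⁻¹ ∧
    ∀ i : Fin n,
      S i i * nabla ((V.map ⇑nabla.symm * Am * U.map ⇑nabla.symm) i i) = nabla (piMu μ) := by
  classical
  set Ug := U.map ⇑nabla.symm with hUg'
  set Vg := V.map ⇑nabla.symm with hVg'
  set Sg := S.map ⇑nabla.symm with hSg'
  set T := Vg * Am * Ug with hT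
  have hUgu : IsUnit Ug :=
    hU.map (RingHom.mapMatrix (m := Fin n) nabla.symm.toAlgHom.toRingHom)
  have hVgu : IsUnit Vg :=
    hV.map (RingHom.mapMatrix (m := Fin n) nabla.symm.toAlgHom.toRingHom)
  have hUgd : IsUnit Ug.det := (Matrix.isUnit_iff_isUnit_det _).mp hUgu
  have hVgd : IsUnit Vg.det := (Matrix.isUnit_iff_isUnit_det _).mp hVgu
  have hUd : IsUnit U.det := (Matrix.isUnit_iff_isUnit_det _).mp hU
  have hA1g : A1.map ⇑nabla.symm = Ug * Sg * Vg := by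
    rw [hA1, map_mul_symm, map_mul_symm]
  have h1' : Am * Ug * Sg * Vg = piMu μ • 1 := by
    rw [mul_assoc, mul_assoc, ← mul_assoc Ug, ← hA1g, h1]
  have h2' : Ug * Sg * Vg * Am = piMu μ • 1 := by
    have := congrArg (fun M => M.map ⇑nabla.symm) h2
    simp only [map_mul_symm, map_cancel, map_smul_one] at this
    rw [hA1g] at this
    exact this
  have hSgT : Sg * T = piMu μ • 1 := by
    have key : Sg * Vg * Am = piMu μ • Ug⁻¹ := by
      have := congrArg (fun M => Ug⁻¹ * M) h2'
      rw [← mul_assoc, ← mul_assoc, ← mul_assoc, Matrix.nonsing_inv_mul _ hUgd, one_mul,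
        mul_smul_comm, mul_one] at this
      exact this
    rw [hT, ← mul_assoc, ← mul_assoc, key, Matrix.smul_mul, Matrix.nonsing_inv_mul _ hUgd]
  have hTSg : T * Sg = piMu μ • 1 := by
    have key : Am * Ug * Sg = piMu μ • Vg⁻¹ := by
      have := congrArg (fun M => M * Vg⁻¹) h1'
      rw [mul_assoc, Matrix.mul_nonsing_inv _ hVgd, mul_one, Matrix.smul_mul, one_mul] at this
      exact this
    rw [hT, mul_assoc, mul_assoc, ← mul_assoc Am, key, mul_smul_comm,
      Matrix.mul_nonsing_inv _ hVgd]
  have hSgdiag : Sg.IsDiag := hS.map (map_zero _)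
  have hentry : ∀ i j, Sg i i * T i j = (piMu μ • (1:Matrix (Fin n) (Fin n) (Polynomial ℂ))) i j := by
    intro i j
    have hsum : (Sg * T) i j = Sg i i * T i j := by
      rw [Matrix.mul_apply]
      exact Finset.sum_eq_single_of_mem i (Finset.mem_univ i)
        (fun k _ hk => by rw [hSgdiag (Ne.symm hk), zero_mul])
    rw [← hsum, hSgT]
  have hSgii : ∀ i, Sg i i ≠ 0 := by
    intro i hzero
    have := hentry i i
    rw [hzero, zero_mul] at this
    simp [Matrix.one_apply] at this
    exact piMu_ne_zero μ this.symm
  have hTdiag : T.IsDiag := by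
    intro i j hij
    have := hentry i j
    simp [Matrix.one_apply, hij] at this
    rcases this with h | h
    · exact absurd h (hSgii i)
    · exact h
  have hgoal2 : S * T.map ⇑nabla = nabla (piMu μ) • 1 := by
    have hTmap : T.map ⇑nabla = V * Am.map ⇑nabla * U := by
      rw [hT, map_mul_nabla, map_mul_nabla, hUg', hVg', map_cancel', map_cancel']
    have h2'' : U * (S * (V * Am.map ⇑nabla)) = nabla (piMu μ) • 1 := by
      rw [← mul_assoc, ← mul_assoc, ← hA1, h2]
    have key : S * (V * Am.map ⇑nabla) = nabla (piMu μ) • U⁻¹ := by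
      have := congrArg (fun M => U⁻¹ * M) h2''
      rw [← mul_assoc, Matrix.nonsing_inv_mul _ hUd, one_mul, mul_smul_comm, mul_one] at this
      exact this
    rw [hTmap, ← mul_assoc, ← mul_assoc, mul_assoc S V, key, Matrix.smul_mul,
      Matrix.nonsing_inv_mul _ hUd]
  refine ⟨hTdiag, hgoal2, ?_, ?_⟩
  · rw [hT, ← mul_assoc, ← mul_assoc, Matrix.nonsing_inv_mul _ hVgd, one_mul,
      mul_assoc, Matrix.mul_nonsing_inv _ hUgd, mul_one]
  · intro i
    have := congrFun (congrFun hgoal2 i) i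
    rw [Matrix.mul_apply] at this
    rw [Finset.sum_eq_single_of_mem i (Finset.mem_univ i)
      (fun k _ hk => by rw [hS (Ne.symm hk), zero_mul])] at this
    simpa [Matrix.map_apply, Matrix.one_apply] using this
end

section
/- Let μ ∈ ℂ and let A₋₁, A₁ ∈ M_n(ℂ[z]) satisfy A₋₁(z)·A₁(z−1) = π_μ(z)·I_n and A₁(z)·A₋₁(z+1) = π_μ(z+1)·I_n (so they define a Casimir representation of semi-level μ on ℂ[z]^n). Suppose A₁(z) = U(z)·S(z)·V(z) with U, V ∈ GL_n(ℂ[z]) and S = diag(s₁,…,s_n) with each s_i monic and s_i dividing s_{i+1} (the Smith normal form of A₁). Then every s_i divides π_μ(z+1) = (z+μ+1)(z−μ); consequently each s_i ∈ {1, z+μ+1, z−μ, (z+μ+1)(z−μ)} and S has one of the forms S₊(i,j,k) = diag(1 (i times), z+μ+1 (j times), π_μ(z+1) (k times)) with i+j+k = n and j > 0, S₀(l,m) = diag(1 (l times), π_μ(z+1) (m times)) with l+m = n, or S₋(i,j,k) = diag(1 (i times), z−μ (j times), π_μ(z+1) (k times)) with i+j+k = n and j > 0. -/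
open Polynomial

lemma monic_dvd_quad {a b : ℂ} {p : Polynomial ℂ} (hp : p.Monic)
    (hdvd : p ∣ (X - C a) * (X - C b)) :
    p = 1 ∨ p = X - C a ∨ p = X - C b ∨ p = (X - C a) * (X - C b) := by
  have hq : ((X - C a) * (X - C b)).Monic := (monic_X_sub_C a).mul (monic_X_sub_C b)
  have hdeg2 : ((X - C a) * (X - C b)).natDegree = 2 := by
    rw [natDegree_mul (X_sub_C_ne_zero a) (X_sub_C_ne_zero b), natDegree_X_sub_C,
      natDegree_X_sub_C]
  have hle : p.natDegree ≤ 2 := hdeg2 ▸ natDegree_le_of_dvd hdvd hq.ne_zero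
  interval_cases h : p.natDegree
  · exact Or.inl (hp.natDegree_eq_zero.mp h)
  · have hpe : p = X - C (-(p.coeff 0)) := by
      have h2 := hp.eq_X_add_C h
      rw [h2]; simp
    set r := -(p.coeff 0) with hr
    have hroot : ((X - C a) * (X - C b)).IsRoot r := by
      obtain ⟨c, hc⟩ := hdvd
      rw [hc]
      have : p.IsRoot r := by rw [hpe]; simp
      simp [IsRoot, this.eq_zero]
    have : (r - a) * (r - b) = 0 := by simpa [IsRoot] using hroot
    rcases mul_eq_zero.mp this with h' | h'
    · right; left; rw [hpe, sub_eq_zero.mp h']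
    · right; right; left; rw [hpe, sub_eq_zero.mp h']
  · right; right; right
    exact (Polynomial.eq_of_monic_of_dvd_of_natDegree_le hp hq hdvd (by omega)).symm

lemma initial_seg {n : ℕ} (P : Fin n → Prop) [DecidablePred P]
    (hdc : ∀ i j : Fin n, i ≤ j → P j → P i) (l : Fin n) :
    P l ↔ (l : ℕ) < (Finset.univ.filter P).card := by
  constructor
  · intro hl
    have hsub : Finset.Iic l ⊆ Finset.univ.filter P := by
      intro j hj
      simp only [Finset.mem_Iic] at hj
      exact Finset.mem_filter.mpr ⟨Finset.mem_univ _, hdc j l hj hl⟩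
    have := Finset.card_le_card hsub
    rw [Fin.card_Iic] at this
    omega
  · intro hl
    by_contra hnl
    have hsub : Finset.univ.filter P ⊆ Finset.Iio l := by
      intro j hj
      simp only [Finset.mem_filter] at hj
      simp only [Finset.mem_Iio]
      by_contra hge
      exact hnl (hdc l j (le_of_not_gt hge) hj.2)
    have := Finset.card_le_card hsub
    rw [Fin.card_Iio] at this
    omega

/-- if `(A₋₁, A₁)` defines a Casimir representation of semi-level `μ` (matrix
identities) and `A₁ = U·diag(s₁,…,s_n)·V` is a Smith normal form (`U, V` invertible, `s_i`
monic, `s_i ∣ s_{i+1}`), then every `s_i` divides `π_μ(z+1) = (z+μ+1)(z−μ)`; consequently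
every `s_i ∈ {1, z+μ+1, z−μ, π_μ(z+1)}` and the diagonal has one of the forms `S₊(i,j,k)`,
`S₀(l,m)`, `S₋(i,j,k)` (blocks of `1`'s, then a linear factor, then `π_μ(z+1)`'s; the middle
block possibly empty giving `S₀`). -/
theorem stmt_4 (μ : ℂ) (n : ℕ)
    (Am A1 U V : Matrix (Fin n) (Fin n) (Polynomial ℂ))
    (s : Fin n → Polynomial ℂ)
    (h1 : Am * A1.map ⇑nabla.symm = piMu μ • (1 : Matrix (Fin n) (Fin n) (Polynomial ℂ)))
    (h2 : A1 * Am.map ⇑nabla = (nabla (piMu μ)) • (1 : Matrix (Fin n) (Fin n) (Polynomial ℂ)))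
    (hU : IsUnit U) (hV : IsUnit V)
    (hA1 : A1 = U * Matrix.diagonal s * V)
    (hmonic : ∀ i, (s i).Monic)
    (hchain : ∀ i j : Fin n, i ≤ j → s i ∣ s j) :
    nabla (piMu μ) = (X + C μ + 1) * (X - C μ) ∧
    (∀ i, s i ∣ nabla (piMu μ)) ∧
    (∀ i, s i = 1 ∨ s i = X + C μ + 1 ∨ s i = X - C μ ∨ s i = nabla (piMu μ)) ∧
    (∃ (a b : ℕ) (d : Polynomial ℂ), a ≤ b ∧ b ≤ n ∧
      (d = X + C μ + 1 ∨ d = X - C μ) ∧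
      (∀ l : Fin n, (l : ℕ) < a → s l = 1) ∧
      (∀ l : Fin n, a ≤ (l : ℕ) → (l : ℕ) < b → s l = d) ∧
      (∀ l : Fin n, b ≤ (l : ℕ) → s l = nabla (piMu μ))) := by
  classical
  -- notation
  set f := nabla (piMu μ) with hfdef
  have hpq : (X + C μ + 1 : Polynomial ℂ) = X - C (-(μ+1)) := by
    rw [map_neg, map_add, map_one]; ring
  have hf : f = (X + C μ + 1) * (X - C μ) := by
    rw [hfdef]
    simp only [nabla, piMu, algEquivAevalXAddC_apply, map_mul, map_add, map_sub, map_one,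
      aeval_X, aeval_C, algebraMap_eq]
    ring
  have hfmonic : f.Monic := by
    rw [hf, hpq]; exact (monic_X_sub_C _).mul (monic_X_sub_C _)
  have hfdeg : f.natDegree = 2 := by
    rw [hf, hpq, natDegree_mul (X_sub_C_ne_zero _) (X_sub_C_ne_zero _), natDegree_X_sub_C,
      natDegree_X_sub_C]
  have hf1 : f ≠ 1 := fun h => by simp [h] at hfdeg
  -- divisibility
  obtain ⟨u, rfl⟩ := hU
  have key : Matrix.diagonal s * (V * Am.map ⇑nabla *
        (u : Matrix (Fin n) (Fin n) (Polynomial ℂ)))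
      = f • (1 : Matrix (Fin n) (Fin n) (Polynomial ℂ)) := by
    have e1 : Matrix.diagonal s * (V * Am.map ⇑nabla *
          (u : Matrix (Fin n) (Fin n) (Polynomial ℂ)))
        = (↑u⁻¹ : Matrix (Fin n) (Fin n) (Polynomial ℂ)) * (A1 * Am.map ⇑nabla) *
          (u : Matrix (Fin n) (Fin n) (Polynomial ℂ)) := by
      rw [hA1]
      have e2 : (↑u⁻¹ : Matrix (Fin n) (Fin n) (Polynomial ℂ)) *
          (((u : Matrix (Fin n) (Fin n) (Polynomial ℂ)) * Matrix.diagonal s * V) *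
            Am.map ⇑nabla) * (u : Matrix (Fin n) (Fin n) (Polynomial ℂ))
          = ((↑u⁻¹ : Matrix (Fin n) (Fin n) (Polynomial ℂ)) *
            (u : Matrix (Fin n) (Fin n) (Polynomial ℂ))) *
            (Matrix.diagonal s * (V * Am.map ⇑nabla *
              (u : Matrix (Fin n) (Fin n) (Polynomial ℂ)))) := by
        simp [mul_assoc]
      rw [e2, u.inv_mul, one_mul]
    rw [e1, h2, Matrix.mul_smul, Matrix.smul_mul, mul_one, u.inv_mul]
  have hdvd : ∀ i, s i ∣ f := by
    intro i
    have h := congrArg (fun M : Matrix (Fin n) (Fin n) (Polynomial ℂ) => M i i) key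
    simp only [Matrix.diagonal_mul, Matrix.smul_apply, Matrix.one_apply_eq, smul_eq_mul,
      mul_one] at h
    exact ⟨_, h.symm⟩
  -- classification
  have hclass : ∀ i, s i = 1 ∨ s i = X + C μ + 1 ∨ s i = X - C μ ∨ s i = f := by
    intro i
    have := monic_dvd_quad (a := -(μ+1)) (b := μ) (hmonic i) (by rw [← hpq, ← hf]; exact hdvd i)
    rw [← hpq, ← hf] at this
    exact this
  refine ⟨hf, hdvd, hclass, ?_⟩
  -- block structure
  set a := (Finset.univ.filter (fun i : Fin n => s i = 1)).card with hadef
  set b := (Finset.univ.filter (fun i : Fin n => s i ≠ f)).card with hbdef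
  have hdc1 : ∀ i j : Fin n, i ≤ j → s j = 1 → s i = 1 := by
    intro i j hij hj
    exact (hmonic i).eq_one_of_isUnit (isUnit_of_dvd_one (hj ▸ hchain i j hij))
  have hdcf : ∀ i j : Fin n, i ≤ j → s j ≠ f → s i ≠ f := by
    intro i j hij hj hi
    apply hj
    have hdvd1 : f ∣ s j := hi ▸ hchain i j hij
    have hdeg : (s j).natDegree ≤ f.natDegree :=
      natDegree_le_of_dvd (hdvd j) hfmonic.ne_zero
    exact Polynomial.eq_of_monic_of_dvd_of_natDegree_le hfmonic (hmonic j) hdvd1 hdeg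
  have hAiff : ∀ l : Fin n, s l = 1 ↔ (l : ℕ) < a := fun l => initial_seg _ hdc1 l
  have hBiff : ∀ l : Fin n, s l ≠ f ↔ (l : ℕ) < b := fun l => initial_seg _ hdcf l
  have hab : a ≤ b := by
    apply Finset.card_le_card
    intro i hi
    simp only [Finset.mem_filter] at hi ⊢
    exact ⟨hi.1, fun h => hf1 (h.symm.trans hi.2)⟩
  have hbn : b ≤ n := le_trans (Finset.card_filter_le _ _) (by simp)
  have hdeg1p : (X + C μ + 1 : Polynomial ℂ).natDegree = 1 := by rw [hpq, natDegree_X_sub_C]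
  have hdeg1q : (X - C μ : Polynomial ℂ).natDegree = 1 := natDegree_X_sub_C μ
  have hmidcls : ∀ l : Fin n, a ≤ (l : ℕ) → (l : ℕ) < b →
      s l = X + C μ + 1 ∨ s l = X - C μ := by
    intro l hla hlb
    have h1 : s l ≠ 1 := fun h => by have := (hAiff l).mp h; omega
    have h2 : s l ≠ f := (hBiff l).mpr hlb
    rcases hclass l with h | h | h | h
    · exact absurd h h1
    · exact Or.inl h
    · exact Or.inr h
    · exact absurd h h2
  by_cases hex : ∃ l : Fin n, a ≤ (l : ℕ) ∧ (l : ℕ) < b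
  · obtain ⟨l₀, hl₀a, hl₀b⟩ := hex
    refine ⟨a, b, s l₀, hab, hbn, hmidcls l₀ hl₀a hl₀b, ?_, ?_, ?_⟩
    · intro l hl; exact (hAiff l).mpr hl
    · intro l hla hlb
      have hd0 : (s l₀).natDegree = 1 := by
        rcases hmidcls l₀ hl₀a hl₀b with h | h <;> rw [h]
        · exact hdeg1p
        · exact hdeg1q
      have hdl : (s l).natDegree = 1 := by
        rcases hmidcls l hla hlb with h | h <;> rw [h]
        · exact hdeg1p
        · exact hdeg1q
      rcases le_total l l₀ with h | h
      · exact (Polynomial.eq_of_monic_of_dvd_of_natDegree_le (hmonic l) (hmonic l₀)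
          (hchain l l₀ h) (by omega)).symm
      · exact Polynomial.eq_of_monic_of_dvd_of_natDegree_le (hmonic l₀) (hmonic l)
          (hchain l₀ l h) (by omega)
    · intro l hl
      by_contra h
      have := (hBiff l).mp h; omega
  · refine ⟨a, b, X + C μ + 1, hab, hbn, Or.inl rfl, ?_, ?_, ?_⟩
    · intro l hl; exact (hAiff l).mpr hl
    · intro l hla hlb; exact absurd ⟨l, hla, hlb⟩ hex
    · intro l hl
      by_contra h
      have := (hBiff l).mp h; omega
end

section
/- Let μ ∈ ℂ and let (φ₋₁, φ₁) be a Casimir representation of semi-level μ on a torsion-free ℂ[z]-module V (for instance V = ℂ[z]^n). If a ℂ[z]-linear endomorphism φ of V commutes with φ₁, then φ also commutes with φ₋₁. Hence the algebra of sl(2)-endomorphisms of V (ℂ-linear maps commuting with multiplication by z, φ₋₁ and φ₁) equals {φ ∈ End_{ℂ[z]}(V) : φ∘φ₁ = φ₁∘φ}. -/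
open Polynomial

/-- for a Casimir representation `(φ₋₁, φ₁)` of semi-level `μ` on a torsion-free
`ℂ[z]`-module `M`, any `ℂ[z]`-linear endomorphism commuting with `φ₁` also commutes with
`φ₋₁`; hence the `sl(2)`-endomorphism algebra equals
`{φ ∈ End_{ℂ[z]}(M) : φ∘φ₁ = φ₁∘φ}`. -/
theorem stmt_5 {M : Type*} [AddCommGroup M] [Module (Polynomial ℂ) M]
    (htf : ∀ (p : Polynomial ℂ) (v : M), p • v = 0 → p = 0 ∨ v = 0)
    (μ : ℂ) (φm φp : M → M) (h : IsCasimirRep μ φm φp) :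
    (∀ φ : M →ₗ[Polynomial ℂ] M, (∀ v, φ (φp v) = φp (φ v)) →
      ∀ v, φ (φm v) = φm (φ v)) ∧
    {φ : M →ₗ[Polynomial ℂ] M |
        (∀ v, φ (φm v) = φm (φ v)) ∧ (∀ v, φ (φp v) = φp (φ v))} =
      {φ : M →ₗ[Polynomial ℂ] M | ∀ v, φ (φp v) = φp (φ v)} := by
  obtain ⟨hm, hp, hmp, hpm⟩ := h
  have hpi : piMu μ ≠ 0 := by
    have heq : piMu μ = (X + C μ) * (X - C (μ + 1)) := by
      simp only [piMu, map_add, map_one]; ring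
    rw [heq]
    exact ((monic_X_add_C μ).mul (monic_X_sub_C (μ + 1))).ne_zero
  have hp0 : φp 0 = 0 := by
    have := hp.1 0 0
    simpa using this
  have hinj : Function.Injective φp := by
    intro a b hab
    have hsub : φp (a - b) = 0 := by
      have := hp.1 (a - b) b
      rw [sub_add_cancel, hab] at this
      nth_rewrite 1 [← zero_add (φp b)] at this
      exact (add_right_cancel this).symm
    have : piMu μ • (a - b) = 0 := by
      rw [← hmp (a - b), hsub]
      have := hm.1 0 0
      simpa using this
    rcases htf _ _ this with h1 | h1
    · exact absurd h1 hpi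
    · exact sub_eq_zero.mp h1
  have key : ∀ φ : M →ₗ[Polynomial ℂ] M, (∀ v, φ (φp v) = φp (φ v)) →
      ∀ v, φ (φm v) = φm (φ v) := by
    intro φ hφ v
    apply hinj
    calc φp (φ (φm v)) = φ (φp (φm v)) := (hφ (φm v)).symm
      _ = φ ((nabla (piMu μ)) • v) := by rw [hpm v]
      _ = (nabla (piMu μ)) • φ v := φ.map_smul _ _
      _ = φp (φm (φ v)) := (hpm (φ v)).symm
  refine ⟨key, ?_⟩
  ext φ
  simp only [Set.mem_setOf_eq]
  exact ⟨fun h => h.2, fun h => ⟨key φ h, h⟩⟩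
end

section
/- Let μ ∈ ℂ, let V be a free ℂ[z]-module of finite rank, V* = Hom_{ℂ[z]}(V, ℂ[z]) its dual, and let (φ₋₁, φ₁) be a Casimir representation of semi-level μ on V. Define φ₋₁^∨(ω) := ∇⁻¹∘ω∘φ₁ and φ₁^∨(ω) := ∇∘ω∘φ₋₁ for ω ∈ V*. Then φ₋₁^∨ ∈ End₋₁(V*), φ₁^∨ ∈ End₁(V*), and (φ₋₁^∨, φ₁^∨) is a Casimir representation of semi-level μ on V*. -/
open Polynomial

/-- if `(φ₋₁, φ₁)` is a Casimir representation of semi-level `μ` on a free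
`ℂ[z]`-module `V` of finite rank, then the dual maps `φ₋₁^∨(ω) = ∇⁻¹∘ω∘φ₁` and
`φ₁^∨(ω) = ∇∘ω∘φ₋₁` are well-defined semilinear endomorphisms of degrees `-1` and `1` of
`V* = Hom_{ℂ[z]}(V, ℂ[z])`, and `(φ₋₁^∨, φ₁^∨)` is a Casimir representation of semi-level
`μ` on `V*`. -/
theorem stmt_6 {V : Type*} [AddCommGroup V] [Module (Polynomial ℂ) V]
    [Module.Free (Polynomial ℂ) V] [Module.Finite (Polynomial ℂ) V]
    (μ : ℂ) (φm φp : V → V) (h : IsCasimirRep μ φm φp) :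
    ∃ ψm ψp : (V →ₗ[Polynomial ℂ] Polynomial ℂ) → (V →ₗ[Polynomial ℂ] Polynomial ℂ),
      (∀ (ω : V →ₗ[Polynomial ℂ] Polynomial ℂ) (v : V), ψm ω v = nabla.symm (ω (φp v))) ∧
      (∀ (ω : V →ₗ[Polynomial ℂ] Polynomial ℂ) (v : V), ψp ω v = nabla (ω (φm v))) ∧
      IsSemilinearEnd (-1) ψm ∧ IsSemilinearEnd 1 ψp ∧
      IsCasimirRep μ ψm ψp := by
  obtain ⟨⟨hma, hms⟩, ⟨hpa, hps⟩, hmp, hpm⟩ := h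
  have hz1 : ∀ p : Polynomial ℂ, (nabla ^ (1 : ℤ)) p = nabla p := fun p => by rw [zpow_one]
  have hzm : ∀ p : Polynomial ℂ, (nabla ^ (-1 : ℤ)) p = nabla.symm p := fun p => rfl
  have hinv : nabla⁻¹ = nabla.symm := rfl
  refine ⟨fun ω =>
    { toFun := fun v => nabla.symm (ω (φp v))
      map_add' := fun v w => by simp only [hpa, map_add]
      map_smul' := fun p v => by
        simp only [hps, hz1, RingHom.id_apply, smul_eq_mul, LinearMap.map_smul, map_mul,
          AlgEquiv.symm_apply_apply] },
    fun ω =>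
    { toFun := fun v => nabla (ω (φm v))
      map_add' := fun v w => by simp only [hma, map_add]
      map_smul' := fun p v => by
        simp only [hms, hzm, RingHom.id_apply, smul_eq_mul, LinearMap.map_smul, map_mul,
          AlgEquiv.apply_symm_apply] },
    fun _ _ => rfl, fun _ _ => rfl, ?_, ?_, ?_, ?_, ?_, ?_⟩
  · exact ⟨fun ω η => by ext v; simp, fun p ω => by
      ext v; simp [hzm, hinv, smul_eq_mul, map_mul]⟩
  · exact ⟨fun ω η => by ext v; simp, fun p ω => by
      ext v; simp [hz1, smul_eq_mul, map_mul]⟩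
  · exact ⟨fun ω η => by ext v; simp, fun p ω => by
      ext v; simp [hzm, hinv, smul_eq_mul, map_mul]⟩
  · exact ⟨fun ω η => by ext v; simp, fun p ω => by
      ext v; simp [hz1, smul_eq_mul, map_mul]⟩
  · intro ω; ext v
    simp only [LinearMap.coe_mk, AddHom.coe_mk, LinearMap.smul_apply, smul_eq_mul]
    rw [AlgEquiv.symm_apply_apply, hmp, map_smul, smul_eq_mul]
  · intro ω; ext v
    simp only [LinearMap.coe_mk, AddHom.coe_mk, LinearMap.smul_apply, smul_eq_mul]
    rw [AlgEquiv.apply_symm_apply, hpm, map_smul, smul_eq_mul]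
end

section
/- Let φ₋₁ ∈ End₋₁(ℂ[z]) and φ₁ ∈ End₁(ℂ[z]) satisfy φ₋₁∘φ₁ − φ₁∘φ₋₁ = multiplication by −2z (i.e. they define an sl(2)-module structure on the rank-one free ℂ[z]-module ℂ[z], with L₀ acting by multiplication by z). Then there exists ν ∈ ℂ such that φ₋₁∘φ₁ = multiplication by (z − 1/2)² + ν and φ₁∘φ₋₁ = multiplication by (z + 1/2)² + ν; in particular the Casimir operator 4·((z−1/2)²·id − φ₋₁∘φ₁) acts by the constant −4ν, so every polynomial sl(2)-representation of rank one is a Casimir representation. -/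
open Polynomial

lemma nabla_apply (p : Polynomial ℂ) : nabla p = p.comp (X + C 1) := by
  rw [nabla, algEquivAevalXAddC_apply, comp_eq_aeval]

lemma nabla_symm_apply (p : Polynomial ℂ) : nabla.symm p = p.comp (X - C 1) := by
  rw [nabla, algEquivAevalXAddC_symm, algEquivAevalXAddC_apply, comp_eq_aeval, map_neg, map_one,
    sub_eq_add_neg]

lemma const_of_shift_invariant (G : Polynomial ℂ) (h : nabla G = G) :
    G = C (G.eval 0) := by
  have key : ∀ x : ℂ, G.eval (x + 1) = G.eval x := by
    intro x
    conv_rhs => rw [← h, nabla_apply, eval_comp]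
    simp [add_comm]
  have hn : ∀ n : ℕ, G.eval (n : ℂ) = G.eval 0 := by
    intro n
    induction n with
    | zero => simp
    | succ n ih => push_cast; rw [key]; exact ih
  apply eq_of_infinite_eval_eq
  apply Set.Infinite.mono (s := Set.range ((↑) : ℕ → ℂ))
    (t := { x | eval x G = eval x (C (eval 0 G)) })
  · rintro _ ⟨n, rfl⟩
    simp [hn n]
  · exact Set.infinite_range_of_injective Nat.cast_injective

/-- any `sl(2)`-module structure `(φ₋₁, φ₁)` on the rank-one free module `ℂ[z]`
(with `L₀` acting by multiplication by `z`) satisfies `φ₋₁∘φ₁ = ((z−1/2)² + ν)·` and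
`φ₁∘φ₋₁ = ((z+1/2)² + ν)·` for some `ν ∈ ℂ`; in particular the Casimir operator
`4((z−1/2)²·id − φ₋₁∘φ₁)` acts by the constant `−4ν`, so every rank-one polynomial
`sl(2)`-representation is a Casimir representation. -/
theorem stmt_8 (φm φp : Polynomial ℂ → Polynomial ℂ)
    (hm : IsSemilinearEnd (-1) φm) (hp : IsSemilinearEnd 1 φp)
    (hcomm : ∀ p : Polynomial ℂ, φm (φp p) - φp (φm p) = ((-2 : Polynomial ℂ) * X) • p) :
    ∃ ν : ℂ,
      (∀ p : Polynomial ℂ, φm (φp p) = ((X - C (1/2 : ℂ)) ^ 2 + C ν) • p) ∧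
      (∀ p : Polynomial ℂ, φp (φm p) = ((X + C (1/2 : ℂ)) ^ 2 + C ν) • p) ∧
      (∀ p : Polynomial ℂ,
        (4 : Polynomial ℂ) • ((X - C (1/2 : ℂ)) ^ 2 • p - φm (φp p)) = C (-4 * ν) • p) := by
  set a := φp 1 with ha
  set b := φm 1 with hb
  have hpEq : ∀ p : Polynomial ℂ, φp p = nabla p * a := by
    intro p
    have := hp.2 p 1
    simpa [smul_eq_mul] using this
  have hmEq : ∀ p : Polynomial ℂ, φm p = nabla.symm p * b := by
    intro p
    have := hm.2 p 1
    simpa [smul_eq_mul, zpow_neg, zpow_one] using this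
  set F : Polynomial ℂ := nabla.symm a * b with hF
  have hmp : ∀ p : Polynomial ℂ, φm (φp p) = p * F := by
    intro p
    rw [hpEq, hmEq, map_mul, AlgEquiv.symm_apply_apply, hF]; ring
  have hpm : ∀ p : Polynomial ℂ, φp (φm p) = p * nabla F := by
    intro p
    rw [hmEq, hpEq, hF]
    simp only [map_mul, AlgEquiv.apply_symm_apply]
    ring
  have hrel : F - nabla F = (-2 : Polynomial ℂ) * X := by
    have := hcomm 1
    rw [hmp, hpm] at this
    simpa [smul_eq_mul] using this
  -- G := F - (X^2 - X) is shift invariant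
  set G : Polynomial ℂ := F - (X ^ 2 - X) with hG
  have hnG : nabla G = G := by
    have h1 : nabla (X ^ 2 - X : Polynomial ℂ) = X ^ 2 + X := by
      rw [nabla_apply]
      simp only [sub_comp, pow_comp, X_comp, C_1]
      ring
    have : G - nabla G = 0 := by
      rw [hG, map_sub, h1]
      have : F - nabla F - (X ^ 2 - X - (X ^ 2 + X)) = 0 := by
        rw [hrel]; ring
      linear_combination this
    exact (sub_eq_zero.mp this).symm
  obtain hGc := const_of_shift_invariant G hnG
  set c := G.eval 0 with hc
  refine ⟨c - 1/4, ?_, ?_, ?_⟩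
  · intro p
    rw [hmp, smul_eq_mul]
    have hFeq : F = (X - C (1/2 : ℂ)) ^ 2 + C (c - 1/4) := by
      have : F = X ^ 2 - X + C c := by
        have := hGc
        rw [hG] at this
        linear_combination this
      rw [this, C_sub]
      have h12 : (C (1/2 : ℂ)) ^ 2 = C (1/4 : ℂ) := by rw [← C_pow]; norm_num
      have h2 : (C (1/2 : ℂ)) * 2 = (1 : Polynomial ℂ) := by
        rw [show (2 : Polynomial ℂ) = C 2 from (map_ofNat C 2).symm, ← C_mul, ← C_1]
        norm_num
      linear_combination X * h2 - h12
    rw [hFeq]; ring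
  · intro p
    rw [hpm, smul_eq_mul]
    have hFeq : nabla F = (X + C (1/2 : ℂ)) ^ 2 + C (c - 1/4) := by
      have hF2 : F = X ^ 2 - X + C c := by
        have := hGc
        rw [hG] at this
        linear_combination this
      rw [hF2, nabla_apply]
      simp only [add_comp, sub_comp, pow_comp, X_comp, C_comp, C_1, C_sub]
      have h12 : (C (1/2 : ℂ)) ^ 2 = C (1/4 : ℂ) := by rw [← C_pow]; norm_num
      have h2 : (C (1/2 : ℂ)) * 2 = (1 : Polynomial ℂ) := by
        rw [show (2 : Polynomial ℂ) = C 2 from (map_ofNat C 2).symm, ← C_mul, ← C_1]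
        norm_num
      linear_combination -(X * h2) - h12
    rw [hFeq]; ring
  · intro p
    rw [hmp, smul_eq_mul, smul_eq_mul, smul_eq_mul]
    have hFeq : F = (X - C (1/2 : ℂ)) ^ 2 + C (c - 1/4) := by
      have : F = X ^ 2 - X + C c := by
        have := hGc
        rw [hG] at this
        linear_combination this
      rw [this, C_sub]
      have h12 : (C (1/2 : ℂ)) ^ 2 = C (1/4 : ℂ) := by rw [← C_pow]; norm_num
      have h2 : (C (1/2 : ℂ)) * 2 = (1 : Polynomial ℂ) := by
        rw [show (2 : Polynomial ℂ) = C 2 from (map_ofNat C 2).symm, ← C_mul, ← C_1]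
        norm_num
      linear_combination X * h2 - h12
    rw [hFeq]
    have h4 : (C (-4 * (c - 1/4)) : Polynomial ℂ) = -4 * C (c - 1/4) := by
      rw [C_mul, map_neg, map_ofNat]
    rw [h4]; ring
end

section
/- Let μ ∈ ℂ, let (φ₋₁, φ₁) be a Casimir representation of semi-level μ on V = ℂ[z]^n, and let V' = ℂ[z]^k carry an sl(2)-module structure given by φ'₋₁ ∈ End₋₁(V'), φ'₁ ∈ End₁(V') with φ'₋₁∘φ'₁ − φ'₁∘φ'₋₁ = multiplication by −2z. Let ψ : V' → V be an injective ℂ[z]-linear map with ψ∘φ'₁ = φ₁∘ψ and ψ∘φ'₋₁ = φ₋₁∘ψ (an injective morphism of sl(2)-modules). If φ'₁ is bijective (i.e. V' has Smith type S₀(k,0) = (1,…,1)), then the quotient V/ψ(V') is a torsion-free ℂ[z]-module. -/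
open Polynomial

lemma nabla_X_sub_C (a : ℂ) : nabla (X - C a) = X - C (a - 1) := by
  simp [nabla, algEquivAevalXAddC]
  ring

/-- let `(φ₋₁, φ₁)` be a Casimir representation of semi-level `μ` on
`V = ℂ[z]^n`, let `V' = ℂ[z]^k` carry an `sl(2)`-module structure `(φ'₋₁, φ'₁)` and let
`ψ : V' → V` be an injective morphism of `sl(2)`-modules. If `φ'₁` is bijective (Smith type
`S₀(k,0)`), then `V/ψ(V')` is a torsion-free `ℂ[z]`-module. -/
theorem stmt_17 (μ : ℂ) (n k : ℕ)
    (φm φp : (Fin n → Polynomial ℂ) → (Fin n → Polynomial ℂ))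
    (h : IsCasimirRep μ φm φp)
    (φm' φp' : (Fin k → Polynomial ℂ) → (Fin k → Polynomial ℂ))
    (hm' : IsSemilinearEnd (-1) φm') (hp' : IsSemilinearEnd 1 φp')
    (hcomm' : ∀ v : Fin k → Polynomial ℂ,
      φm' (φp' v) - φp' (φm' v) = ((-2 : Polynomial ℂ) * X) • v)
    (ψ : (Fin k → Polynomial ℂ) →ₗ[Polynomial ℂ] (Fin n → Polynomial ℂ))
    (hinj : Function.Injective ψ)
    (hintp : ∀ v, ψ (φp' v) = φp (ψ v))
    (hintm : ∀ v, ψ (φm' v) = φm (ψ v))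
    (hbij : Function.Bijective φp') :
    ∀ (q : Polynomial ℂ) (x : (Fin n → Polynomial ℂ) ⧸ LinearMap.range ψ),
      q • x = 0 → q = 0 ∨ x = 0 := by
  classical
  -- degree-1 semilinearity of φp and φp'
  have hPsmul : ∀ (p : Polynomial ℂ) (v : Fin n → Polynomial ℂ),
      φp (p • v) = nabla p • φp v := by
    intro p v; rw [h.2.1.2 p v, zpow_one]
  have hP'smul : ∀ (p : Polynomial ℂ) (v : Fin k → Polynomial ℂ),
      φp' (p • v) = nabla p • φp' v := by
    intro p v; rw [hp'.2 p v, zpow_one]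
  set K := FractionRing (Polynomial ℂ)
  set alg : Polynomial ℂ →+* K := algebraMap (Polynomial ℂ) K with halg
  have halg_inj : Function.Injective alg := IsFractionRing.injective _ _
  set M : Matrix (Fin n) (Fin k) (Polynomial ℂ) := LinearMap.toMatrix' ψ with hM
  have hMv : ∀ v, M.mulVec v = ψ v := by
    intro v
    rw [← Matrix.toLin'_apply, hM, Matrix.toLin'_toMatrix']
  set MK : Matrix (Fin n) (Fin k) K := M.map alg with hMK
  -- the induced map over the fraction field is injective
  have hker : ∀ x : Fin k → K, MK.mulVec x = 0 → x = 0 := by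
    intro x hx
    obtain ⟨b, hb⟩ := IsLocalization.exist_integer_multiples
      (nonZeroDivisors (Polynomial ℂ)) Finset.univ x
    choose v hv using fun i => hb i (Finset.mem_univ i)
    have hcv : (⇑alg ∘ v) = (alg b) • x := by
      funext i
      simp only [Function.comp_apply, Pi.smul_apply, smul_eq_mul]
      rw [hv i]
      exact Algebra.smul_def _ _
    have hMv0 : M.mulVec v = 0 := by
      funext j
      apply halg_inj
      rw [RingHom.map_mulVec, hcv, ← hMK, Matrix.mulVec_smul, hx]
      simp
    have hv0 : v = 0 := by
      apply hinj
      rw [← hMv v, hMv0, map_zero]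
    have hb0 : alg b ≠ 0 :=
      IsFractionRing.to_map_ne_zero_of_mem_nonZeroDivisors b.2
    funext i
    have : alg b * x i = 0 := by
      rw [← Algebra.smul_def, ← hv i, hv0]
      simp
    rcases mul_eq_zero.mp this with h' | h'
    · exact absurd h' hb0
    · simpa using h'
  have hkerbot : LinearMap.ker (Matrix.mulVecLin MK) = ⊥ := by
    rw [LinearMap.ker_eq_bot']
    intro x hx
    exact hker x hx
  obtain ⟨g, hg⟩ := LinearMap.exists_leftInverse_of_injective (Matrix.mulVecLin MK) hkerbot
  have hgM : ∀ z : Fin k → K, g (MK.mulVec z) = z := by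
    intro z
    have := LinearMap.congr_fun hg z
    simpa using this
  set NK : Matrix (Fin k) (Fin n) K := LinearMap.toMatrix' g with hNKdef
  have hNK : ∀ y, NK.mulVec y = g y := by
    intro y
    rw [← Matrix.toLin'_apply, hNKdef, Matrix.toLin'_toMatrix']
  obtain ⟨c, hc⟩ := IsLocalization.exist_integer_multiples
    (nonZeroDivisors (Polynomial ℂ)) Finset.univ (fun ij : Fin k × Fin n => NK ij.1 ij.2)
  choose Nf hNf using fun ij => hc ij (Finset.mem_univ ij)
  set N : Matrix (Fin k) (Fin n) (Polynomial ℂ) := fun i j => Nf (i, j) with hNdef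
  set d : Polynomial ℂ := (c : Polynomial ℂ) with hddef
  have hd : d ≠ 0 := nonZeroDivisors.ne_zero c.2
  have hNmap : N.map alg = alg d • NK := by
    funext i j
    simp only [Matrix.map_apply, Matrix.smul_apply, smul_eq_mul, hNdef]
    show algebraMap (Polynomial ℂ) K (Nf (i, j)) = alg d * NK i j
    rw [hNf (i, j)]
    exact Algebra.smul_def _ _
  -- the key quasi-inverse identity:  N * ψ v = d • v
  have hchi : ∀ v : Fin k → Polynomial ℂ, N.mulVec (ψ v) = d • v := by
    intro v
    funext i
    apply halg_inj
    rw [RingHom.map_mulVec]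
    have h1 : (⇑alg ∘ ⇑ψ v) = MK.mulVec (⇑alg ∘ v) := by
      funext j
      rw [← hMv v, Function.comp_apply, RingHom.map_mulVec]
    rw [h1, hNmap, Matrix.smul_mulVec, hNK, hgM]
    simp [Algebra.smul_def, map_mul]
  -- if an element outside (X - C a)•V' maps into (X - C a)•V then a is a root of d
  have hbadroot : ∀ (a : ℂ) (v : Fin k → Polynomial ℂ) (w : Fin n → Polynomial ℂ),
      ψ v = (X - C a) • w → (¬ ∃ u, v = (X - C a) • u) → d.IsRoot a := by
    intro a v w hvw hnu
    by_contra hroot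
    have hdvd : ¬ ((X - C a) ∣ d) := fun hdd => hroot (dvd_iff_isRoot.mp hdd)
    have hprime : Prime (X - C a) := prime_X_sub_C a
    have h1 : ∀ i, (X - C a) ∣ v i := by
      intro i
      have h2 : d • v = (X - C a) • (N.mulVec w) := by
        rw [← hchi v, hvw, Matrix.mulVec_smul]
      have h3 : d * v i = (X - C a) * (N.mulVec w) i := by
        have := congrFun h2 i
        simpa using this
      have hdv : (X - C a) ∣ d * v i := ⟨(N.mulVec w) i, h3⟩
      rcases hprime.2.2 d (v i) hdv with h' | h'
      · exact absurd h' hdvd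
      · exact h'
    choose u hu using h1
    exact hnu ⟨u, funext fun i => by rw [Pi.smul_apply, smul_eq_mul, ← hu i]⟩
  -- descent: a bad value propagates to a - 1
  have hstep : ∀ (a : ℂ) (v : Fin k → Polynomial ℂ),
      (¬ ∃ u, v = (X - C a) • u) → (∃ w, ψ v = (X - C a) • w) →
      (¬ ∃ u, φp' v = (X - C (a - 1)) • u) ∧
        (∃ w, ψ (φp' v) = (X - C (a - 1)) • w) := by
    rintro a v hnu ⟨w, hw⟩
    constructor
    · rintro ⟨u, hu⟩
      obtain ⟨u₀, rfl⟩ := hbij.2 u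
      apply hnu
      refine ⟨u₀, hbij.1 ?_⟩
      rw [hu, hP'smul, nabla_X_sub_C]
    · refine ⟨φp w, ?_⟩
      rw [hintp, hw, hPsmul, nabla_X_sub_C]
  -- no bad values at all
  have noBad : ∀ (a : ℂ) (v : Fin k → Polynomial ℂ) (w : Fin n → Polynomial ℂ),
      ψ v = (X - C a) • w → ∃ u, v = (X - C a) • u := by
    intro a v w hvw
    by_contra hnu
    have key : ∀ m : ℕ, ∃ v' w', (¬ ∃ u, v' = (X - C (a - m)) • u) ∧
        ψ v' = (X - C (a - m)) • w' := by
      intro m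
      induction m with
      | zero => exact ⟨v, w, by simpa using hnu, by simpa using hvw⟩
      | succ m ih =>
        obtain ⟨v', w', hnu', hw'⟩ := ih
        obtain ⟨h1, w'', h2⟩ := hstep (a - m) v' hnu' ⟨w', hw'⟩
        have hcast : (a - (m + 1 : ℕ) : ℂ) = a - m - 1 := by push_cast; ring
        exact ⟨φp' v', w'', by rw [hcast]; exact h1, by rw [hcast]; exact h2⟩
    have hroots : ∀ m : ℕ, d.IsRoot (a - m) := by
      intro m
      obtain ⟨v', w', h1, h2⟩ := key m
      exact hbadroot _ v' w' h2 h1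
    have hinf : {x : ℂ | d.IsRoot x}.Infinite := by
      refine Set.infinite_of_injective_forall_mem (f := fun m : ℕ => a - m) ?_ hroots
      intro m₁ m₂ hm
      have : (m₁ : ℂ) = (m₂ : ℂ) := sub_right_injective hm
      exact_mod_cast this
    exact hd (Polynomial.eq_zero_of_infinite_isRoot d hinf)
  -- main induction on the degree of q
  have main : ∀ (m : ℕ) (q : Polynomial ℂ), q ≠ 0 → q.natDegree = m →
      ∀ x : Fin n → Polynomial ℂ, q • x ∈ LinearMap.range ψ → x ∈ LinearMap.range ψ := by
    intro m
    induction m with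
    | zero =>
      rintro q hq hdeg x ⟨v, hv⟩
      obtain ⟨c0, rfl⟩ := Polynomial.natDegree_eq_zero.mp hdeg
      have hc0 : c0 ≠ 0 := fun h' => hq (by simp [h'])
      refine ⟨C c0⁻¹ • v, ?_⟩
      rw [map_smul, hv, smul_smul, ← C_mul, inv_mul_cancel₀ hc0, C_1, one_smul]
    | succ m ih =>
      rintro q hq hdeg x ⟨v, hv⟩
      have hdegpos : 0 < q.degree := natDegree_pos_iff_degree_pos.mp (by omega)
      obtain ⟨a, ha⟩ := Complex.exists_root hdegpos
      obtain ⟨q₁, rfl⟩ := dvd_iff_isRoot.mpr ha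
      have hq₁ : q₁ ≠ 0 := fun h' => hq (by simp [h'])
      have hdeg₁ : q₁.natDegree = m := by
        rw [natDegree_mul (X_sub_C_ne_zero a) hq₁, natDegree_X_sub_C] at hdeg
        omega
      rw [mul_smul] at hv
      obtain ⟨u, rfl⟩ := noBad a v (q₁ • x) hv
      have huq : ψ u = q₁ • x := by
        rw [map_smul] at hv
        funext i
        have := congrFun hv i
        simp only [Pi.smul_apply, smul_eq_mul] at this
        exact mul_left_cancel₀ (X_sub_C_ne_zero a) this
      exact ih q₁ hq₁ hdeg₁ x ⟨u, huq⟩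
  -- conclude
  intro q x hqx
  by_cases hq : q = 0
  · exact Or.inl hq
  · right
    obtain ⟨x₀, rfl⟩ := Submodule.Quotient.mk_surjective _ x
    rw [← Submodule.Quotient.mk_smul, Submodule.Quotient.mk_eq_zero] at hqx
    rw [Submodule.Quotient.mk_eq_zero]
    exact main q.natDegree q hq rfl x₀ hqx
end

section
/- Let μ ∈ ℂ and let A₋₁, A₁ ∈ M_n(ℂ[z]) satisfy A₋₁(z)·A₁(z−1) = π_μ(z)·I_n and A₁(z)·A₋₁(z+1) = π_μ(z+1)·I_n, so that (φ₋₁, φ₁) := (A₋₁∘∇⁻¹, A₁∘∇) is a Casimir representation of semi-level μ on ℂ[z]^n. Then, with respect to the dual basis, the dual representation on Hom_{ℂ[z]}(ℂ[z]^n, ℂ[z]) ≅ ℂ[z]^n (given by φ₁^∨(ω) = ∇∘ω∘φ₋₁) satisfies φ₁^∨ = A₋₁(z+1)ᵗ∘∇. Moreover, if A₁(z) = U(z)·diag(s₁,…,s_n)·V(z) with U, V ∈ GL_n(ℂ[z]), each s_i monic and s_i dividing s_{i+1}, then there exist U', V' ∈ GL_n(ℂ[z]) such that A₋₁(z+1)ᵗ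 = U'(z)·diag(π_μ(z+1)/s_n(z), …, π_μ(z+1)/s₁(z))·V'(z), where each π_μ(z+1)/s_i(z) lies in ℂ[z] since s_i divides π_μ(z+1). In particular, if the representation has Smith type S₊(i,j,k), S₀(l,m) or S₋(i,j,k), then the dual representation has Smith type S₋(k,j,i), S₀(m,l) or S₊(k,j,i) respectively. -/
open Polynomial

/-- Block description of a diagonal Smith form: `a` ones, then the linear factor `d` up to
position `b`, then `π_μ(z+1)`'s. (`a = b` gives the types `S₀(l,m)`; `d = z+μ+1` gives
`S₊(i,j,k)` and `d = z−μ` gives `S₋(i,j,k)`.) -/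
def SmithBlocks (μ : ℂ) (n : ℕ) (f : Fin n → Polynomial ℂ) (a b : ℕ)
    (d : Polynomial ℂ) : Prop :=
  (∀ l : Fin n, (l : ℕ) < a → f l = 1) ∧
  (∀ l : Fin n, a ≤ (l : ℕ) → (l : ℕ) < b → f l = d) ∧
  (∀ l : Fin n, b ≤ (l : ℕ) → f l = nabla (piMu μ))

lemma nabla_piMu_factor (μ : ℂ) : nabla (piMu μ) = (X + C μ + 1) * (X - C μ) := by
  simp only [nabla, piMu, algEquivAevalXAddC_apply, map_mul, map_sub, map_add, aeval_X,
    aeval_C, map_one, Polynomial.algebraMap_eq]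
  ring

lemma XaddC1_ne (μ : ℂ) : (X + C μ + 1 : Polynomial ℂ) ≠ 0 := by
  have : (X + C μ + 1 : Polynomial ℂ) = X + C (μ + 1) := by
    rw [C_add, C_1]; ring
  rw [this]
  exact X_add_C_ne_zero (μ + 1)

lemma XsubC_ne (μ : ℂ) : (X - C μ : Polynomial ℂ) ≠ 0 := X_sub_C_ne_zero μ

lemma nabla_piMu_ne (μ : ℂ) : nabla (piMu μ) ≠ 0 := by
  rw [nabla_piMu_factor]
  exact mul_ne_zero (XaddC1_ne μ) (XsubC_ne μ)

/-- let `(A₋₁∘∇⁻¹, A₁∘∇)` be a Casimir representation of semi-level `μ` on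
`ℂ[z]^n` and let `A₁ = U·diag(s₁,…,s_n)·V` be its Smith normal form. Then (a) in the dual
basis the dual representation satisfies `φ₁^∨ = A₋₁(z+1)ᵗ∘∇` (stated via the canonical
pairing); (b) with `tᵢ := π_μ(z+1)/sᵢ` (so `sᵢ·tᵢ = π_μ(z+1)`), there are invertible `U', V'`
with `A₋₁(z+1)ᵗ = U'·diag(t_n,…,t_1)·V'`; and (c) if the representation has Smith type
`S₊(i,j,k)`, `S₀(l,m)` or `S₋(i,j,k)`, the dual has Smith type `S₋(k,j,i)`, `S₀(m,l)` or
`S₊(k,j,i)` respectively. -/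
theorem stmt_19 (μ : ℂ) (n : ℕ)
    (Am A1 U V : Matrix (Fin n) (Fin n) (Polynomial ℂ))
    (s : Fin n → Polynomial ℂ)
    (h1 : Am * A1.map ⇑nabla.symm = piMu μ • (1 : Matrix (Fin n) (Fin n) (Polynomial ℂ)))
    (h2 : A1 * Am.map ⇑nabla = (nabla (piMu μ)) • (1 : Matrix (Fin n) (Fin n) (Polynomial ℂ)))
    (hU : IsUnit U) (hV : IsUnit V)
    (hA1 : A1 = U * Matrix.diagonal s * V)
    (hmonic : ∀ i, (s i).Monic)
    (hchain : ∀ i j : Fin n, i ≤ j → s i ∣ s j) :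
    (∀ w v : Fin n → Polynomial ℂ,
      ∑ i, ((Am.map ⇑nabla).transpose.mulVec (fun j => nabla (w j))) i * v i =
        nabla (∑ i, w i * (Am.mulVec (fun j => nabla.symm (v j))) i)) ∧
    (∃ t : Fin n → Polynomial ℂ,
      (∀ i, s i * t i = nabla (piMu μ)) ∧
      (∃ U' V' : Matrix (Fin n) (Fin n) (Polynomial ℂ), IsUnit U' ∧ IsUnit V' ∧
        (Am.map ⇑nabla).transpose =
          U' * Matrix.diagonal (fun i => t (Fin.rev i)) * V') ∧
      (∀ a b : ℕ, a ≤ b → b ≤ n → SmithBlocks μ n s a b (X + C μ + 1) →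
        SmithBlocks μ n (fun i => t (Fin.rev i)) (n - b) (n - a) (X - C μ)) ∧
      (∀ a b : ℕ, a ≤ b → b ≤ n → SmithBlocks μ n s a b (X - C μ) →
        SmithBlocks μ n (fun i => t (Fin.rev i)) (n - b) (n - a) (X + C μ + 1))) := by
  set π' : Polynomial ℂ := nabla (piMu μ) with hπ'
  set B : Matrix (Fin n) (Fin n) (Polynomial ℂ) := Am.map ⇑nabla with hB
  constructor
  · -- part (a)
    intro w v
    simp only [Matrix.mulVec, dotProduct, Matrix.transpose_apply, Matrix.map_apply,
      map_sum, map_mul, AlgEquiv.apply_symm_apply, Finset.sum_mul, Finset.mul_sum, hB]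
    rw [Finset.sum_comm]
    exact Finset.sum_congr rfl fun i _ => Finset.sum_congr rfl fun j _ => by ring
  · -- derive B * A1 = π' • 1
    have hBA : B * A1 = π' • 1 := by
      refine Matrix.ext fun i j => ?_
      have h := congrFun (congrFun h1 i) j
      have h' := congrArg (⇑nabla) h
      simp only [Matrix.mul_apply, Matrix.map_apply, map_sum, map_mul,
        AlgEquiv.apply_symm_apply, Matrix.smul_apply, Matrix.one_apply, smul_eq_mul,
        mul_ite, mul_one, mul_zero, apply_ite (⇑nabla), map_zero] at h' ⊢
      simpa [hB, Matrix.mul_apply, Matrix.map_apply, mul_ite, mul_one, mul_zero] using h'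
    have hUdet : IsUnit U.det := (Matrix.isUnit_iff_isUnit_det U).1 hU
    have hVdet : IsUnit V.det := (Matrix.isUnit_iff_isUnit_det V).1 hV
    have hUUi : U * U⁻¹ = 1 := Matrix.mul_nonsing_inv U hUdet
    have hUiU : U⁻¹ * U = 1 := Matrix.nonsing_inv_mul U hUdet
    have hVVi : V * V⁻¹ = 1 := Matrix.mul_nonsing_inv V hVdet
    have hViV : V⁻¹ * V = 1 := Matrix.nonsing_inv_mul V hVdet
    set B' : Matrix (Fin n) (Fin n) (Polynomial ℂ) := V * B * U with hB'
    have hB'D : B' * Matrix.diagonal s = π' • 1 := by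
      have key : B' * Matrix.diagonal s * V = π' • V := by
        have h' : V * (B * A1) = π' • V := by rw [hBA]; simp [Matrix.mul_smul]
        calc B' * Matrix.diagonal s * V = V * (B * (U * Matrix.diagonal s * V)) := by
              rw [hB']; noncomm_ring
          _ = π' • V := by rw [← hA1]; simpa [Matrix.mul_assoc] using h'
      calc B' * Matrix.diagonal s
          = B' * Matrix.diagonal s * V * V⁻¹ := by
            simp only [Matrix.mul_assoc, hVVi, Matrix.mul_one]
        _ = (π' • V) * V⁻¹ := by rw [key]
        _ = π' • (V * V⁻¹) := by rw [Matrix.smul_mul]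
        _ = π' • 1 := by rw [hVVi]
    have hDB' : Matrix.diagonal s * B' = π' • 1 := by
      have key : U * (Matrix.diagonal s * B') = π' • U := by
        have h' : (A1 * B) * U = π' • U := by rw [h2]; simp [Matrix.smul_mul]
        calc U * (Matrix.diagonal s * B') = (U * Matrix.diagonal s * V) * B * U := by
              rw [hB']; noncomm_ring
          _ = π' • U := by rw [← hA1]; simpa [Matrix.mul_assoc] using h'
      calc Matrix.diagonal s * B'
          = U⁻¹ * (U * (Matrix.diagonal s * B')) := by
            conv_rhs => rw [← Matrix.mul_assoc]
            rw [hUiU, Matrix.one_mul]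
        _ = U⁻¹ * (π' • U) := by rw [key]
        _ = π' • (U⁻¹ * U) := by rw [Matrix.mul_smul]
        _ = π' • 1 := by rw [hUiU]
    -- entries
    have hentry : ∀ i j, B' i j * s j = π' * (if i = j then 1 else 0) := by
      intro i j
      have h := congrFun (congrFun hB'D i) j
      simpa [Matrix.mul_apply, Matrix.diagonal, Matrix.smul_apply, Matrix.one_apply,
        smul_eq_mul, Finset.sum_ite_eq] using h
    set t : Fin n → Polynomial ℂ := fun i => B' i i with ht
    have hst : ∀ i, s i * t i = π' := by
      intro i
      have h := hentry i i
      simp only [eq_self_iff_true, if_true, mul_one] at h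
      rw [mul_comm]; exact h
    have hB'diag : B' = Matrix.diagonal t := by
      ext i j
      by_cases hij : i = j
      · subst hij; simp [Matrix.diagonal, ht]
      · have := hentry i j
        simp only [if_neg hij, mul_zero] at this
        rcases mul_eq_zero.1 this with h | h
        · simp [Matrix.diagonal, hij, h]
        · exact absurd h (hmonic j).ne_zero
    refine ⟨t, hst, ?_, ?_, ?_⟩
    · -- part (b)
      set P : Matrix (Fin n) (Fin n) (Polynomial ℂ) :=
        Matrix.of (fun i j => if Fin.rev i = j then 1 else 0) with hP
      have hPM : ∀ M : Matrix (Fin n) (Fin n) (Polynomial ℂ), P * M = fun i j => M (Fin.rev i) j := by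
        intro M; ext i j
        simp [hP, Matrix.mul_apply, ite_mul, Finset.sum_ite_eq]
      have hMP : ∀ M : Matrix (Fin n) (Fin n) (Polynomial ℂ), M * P = fun i j => M i (Fin.rev j) := by
        intro M; ext i j
        have hiff : ∀ k : Fin n, (Fin.rev k = j) = (k = Fin.rev j) := by
          intro k
          simp [Fin.rev_eq_iff]
        simp only [hP, Matrix.mul_apply, Matrix.of_apply, hiff, mul_ite, mul_one, mul_zero,
          Finset.sum_ite_eq', Finset.mem_univ, if_pos]
      have hPP : P * P = 1 := by
        rw [hPM]; ext i j; simp [hP, Fin.rev_rev, Matrix.one_apply, eq_comm]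
      have hPunit : IsUnit P := ⟨⟨P, P, hPP, hPP⟩, rfl⟩
      have hPDP : P * Matrix.diagonal (fun i => t (Fin.rev i)) * P = Matrix.diagonal t := by
        rw [hMP, hPM]; ext i j
        by_cases hij : i = j
        · subst hij; simp [Matrix.diagonal, Fin.rev_rev]
        · have hne : ¬ (Fin.rev i = Fin.rev j) := fun h => hij (Fin.rev_injective h)
          simp [Matrix.diagonal, hij, hne]
      have hBval : B = V⁻¹ * Matrix.diagonal t * U⁻¹ := by
        rw [← hB'diag, hB']
        calc B = (V⁻¹ * V) * B * (U * U⁻¹) := by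
              rw [hViV, hUUi, Matrix.one_mul, Matrix.mul_one]
          _ = V⁻¹ * (V * B * U) * U⁻¹ := by simp only [Matrix.mul_assoc]
      refine ⟨U⁻¹.transpose * P, P * V⁻¹.transpose, ?_, ?_, ?_⟩
      · refine (IsUnit.mul ?_ hPunit)
        exact ⟨⟨U⁻¹.transpose, U.transpose,
          by rw [← Matrix.transpose_mul, hUUi, Matrix.transpose_one],
          by rw [← Matrix.transpose_mul, hUiU, Matrix.transpose_one]⟩, rfl⟩
      · refine (hPunit.mul ?_)
        exact ⟨⟨V⁻¹.transpose, V.transpose,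
          by rw [← Matrix.transpose_mul, hVVi, Matrix.transpose_one],
          by rw [← Matrix.transpose_mul, hViV, Matrix.transpose_one]⟩, rfl⟩
      · calc B.transpose
            = (V⁻¹ * Matrix.diagonal t * U⁻¹).transpose := by rw [hBval]
          _ = U⁻¹.transpose * Matrix.diagonal t * V⁻¹.transpose := by
              simp [Matrix.transpose_mul, Matrix.diagonal_transpose, Matrix.mul_assoc]
          _ = U⁻¹.transpose *
              (P * Matrix.diagonal (fun i => t (Fin.rev i)) * P) * V⁻¹.transpose := by
              rw [hPDP]
          _ = _ := by simp only [Matrix.mul_assoc]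
    · -- part (c1)
      intro a b hab hbn hS
      obtain ⟨hS1, hS2, hS3⟩ := hS
      refine ⟨?_, ?_, ?_⟩
      · intro l hl
        have hrev : b ≤ ((Fin.rev l : Fin n) : ℕ) := by
          have := l.isLt; rw [Fin.val_rev]; omega
        have hs := hS3 (Fin.rev l) hrev
        have := hst (Fin.rev l)
        rw [hs, hπ'] at this
        exact mul_left_cancel₀ (nabla_piMu_ne μ) (by rw [mul_one]; exact this)
      · intro l hl1 hl2
        have h1' : a ≤ ((Fin.rev l : Fin n) : ℕ) ∧ ((Fin.rev l : Fin n) : ℕ) < b := by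
          have := l.isLt; rw [Fin.val_rev]; omega
        have hs := hS2 (Fin.rev l) h1'.1 h1'.2
        have := hst (Fin.rev l)
        rw [hs, hπ', nabla_piMu_factor] at this
        exact mul_left_cancel₀ (XaddC1_ne μ) this
      · intro l hl
        have hrev : ((Fin.rev l : Fin n) : ℕ) < a := by
          have := l.isLt; rw [Fin.val_rev]; omega
        have hs := hS1 (Fin.rev l) hrev
        have := hst (Fin.rev l)
        rw [hs, one_mul] at this
        exact this
    · -- part (c2)
      intro a b hab hbn hS
      obtain ⟨hS1, hS2, hS3⟩ := hS
      refine ⟨?_, ?_, ?_⟩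
      · intro l hl
        have hrev : b ≤ ((Fin.rev l : Fin n) : ℕ) := by
          have := l.isLt; rw [Fin.val_rev]; omega
        have hs := hS3 (Fin.rev l) hrev
        have := hst (Fin.rev l)
        rw [hs, hπ'] at this
        exact mul_left_cancel₀ (nabla_piMu_ne μ) (by rw [mul_one]; exact this)
      · intro l hl1 hl2
        have h1' : a ≤ ((Fin.rev l : Fin n) : ℕ) ∧ ((Fin.rev l : Fin n) : ℕ) < b := by
          have := l.isLt; rw [Fin.val_rev]; omega
        have hs := hS2 (Fin.rev l) h1'.1 h1'.2
        have := hst (Fin.rev l)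
        rw [hs, hπ', nabla_piMu_factor, mul_comm (X + C μ + 1)] at this
        exact mul_left_cancel₀ (XsubC_ne μ) this
      · intro l hl
        have hrev : ((Fin.rev l : Fin n) : ℕ) < a := by
          have := l.isLt; rw [Fin.val_rev]; omega
        have hs := hS1 (Fin.rev l) hrev
        have := hst (Fin.rev l)
        rw [hs, one_mul] at this
        exact this
end
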